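/- Let n ≥ 3 be an integer, R > 1, R_* > 1, let ρ be a regular metric on [1,R_*], and let c ∈ ℝ. Suppose H : [1,R] → [1,R_*] is continuously differentiable with H(1) = 1 and H'(t) > 0 for all t ∈ [1,R], and 𝓛[H](t) = c for all t ∈ [1,R]. Then for every t ∈ [1,R], log t = ∫_1^{H(t)} dy / ( y·√( Ψ( c/(y^n·ρ(y)) ) ) ). -/

import Mathlib

/-- A `C¹` function `ρ : [1,R₁] → (0,∞)` is a *regular metric* if `s ↦ ρ(s)sⁿ`
is nondecreasing on `[1,R₁]` (so its minimum is `ρ(1)`). -/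
def IsRegularMetric (n : ℕ) (R₁ : ℝ) (ρ : ℝ → ℝ) : Prop :=
  ContDiffOn ℝ 1 ρ (Set.Icc 1 R₁) ∧ (∀ s ∈ Set.Icc 1 R₁, 0 < ρ s) ∧
    MonotoneOn (fun s => ρ s * s ^ n) (Set.Icc 1 R₁)

open Set

noncomputable def phiFun (n : ℕ) : ℝ → ℝ :=
  fun x => (1 - x) * (1 + x / ((n : ℝ) - 1)) ^ (((n : ℝ) - 2) / 2)

lemma phiFun_zero (n : ℕ) : phiFun n 0 = 1 := by
  simp [phiFun]

lemma phiFun_strictAntiOn (n : ℕ) (hn : 3 ≤ n) : StrictAntiOn (phiFun n) (Set.Ici 0) := by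
  have hn3 : (3:ℝ) ≤ (n:ℝ) := by exact_mod_cast hn
  apply strictAntiOn_of_deriv_neg (convex_Ici 0)
  · apply ContinuousOn.mul
    · exact (continuous_const.sub continuous_id).continuousOn
    · apply ContinuousOn.rpow_const
      · exact (continuous_const.add (continuous_id.div_const _)).continuousOn
      · intro x hx
        left
        have hx0 : (0:ℝ) ≤ x := hx
        have : (0:ℝ) ≤ x / ((n:ℝ) - 1) := div_nonneg hx0 (by linarith)
        intro h; linarith [h]
  · intro x hx
    rw [interior_Ici] at hx
    have hx0 : (0:ℝ) < x := hx
    have hA : (0:ℝ) < 1 + x / ((n:ℝ) - 1) := by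
      have : (0:ℝ) ≤ x / ((n:ℝ) - 1) := div_nonneg hx0.le (by linarith)
      linarith
    set p : ℝ := ((n:ℝ) - 2) / 2 with hp
    have h1 : HasDerivAt (fun y : ℝ => 1 + y / ((n:ℝ) - 1)) (1 / ((n:ℝ) - 1)) x := by
      simpa using ((hasDerivAt_id x).div_const ((n:ℝ) - 1)).const_add 1
    have h2 := h1.rpow_const (p := p) (Or.inl hA.ne')
    have h3 : HasDerivAt (fun y : ℝ => 1 - y) (-1) x := by
      simpa using (hasDerivAt_id x).const_sub 1
    have hd : HasDerivAt (phiFun n)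
        ((-1) * (1 + x / ((n:ℝ) - 1)) ^ p
          + (1 - x) * (1 / ((n:ℝ) - 1) * p * (1 + x / ((n:ℝ) - 1)) ^ (p - 1))) x := h3.mul h2
    rw [hd.deriv]
    have hApow : (1 + x / ((n:ℝ) - 1)) ^ p
        = (1 + x / ((n:ℝ) - 1)) ^ (p - 1) * (1 + x / ((n:ℝ) - 1)) := by
      rw [← Real.rpow_add_one hA.ne' (p - 1)]
      ring_nf
    have hBpos : (0:ℝ) < (1 + x / ((n:ℝ) - 1)) ^ (p - 1) := Real.rpow_pos_of_pos hA _
    have hbneg : (1 - x) * p / ((n:ℝ) - 1) - (1 + x / ((n:ℝ) - 1)) < 0 := by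
      have hlt : (1 - x) * p < (1 + x / ((n:ℝ) - 1)) * ((n:ℝ) - 1) := by
        have hne : ((n:ℝ) - 1) ≠ 0 := by linarith
        have hx1 : (1 + x / ((n:ℝ) - 1)) * ((n:ℝ) - 1) = ((n:ℝ) - 1) + x := by
          rw [add_mul, one_mul, div_mul_cancel₀ _ hne]
        rw [hx1, hp]; nlinarith
      have := (div_lt_iff₀ (by linarith : (0:ℝ) < (n:ℝ) - 1)).mpr hlt
      linarith
    have heq : (-1) * (1 + x / ((n:ℝ) - 1)) ^ p
          + (1 - x) * (1 / ((n:ℝ) - 1) * p * (1 + x / ((n:ℝ) - 1)) ^ (p - 1))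
        = (1 + x / ((n:ℝ) - 1)) ^ (p - 1)
          * ((1 - x) * p / ((n:ℝ) - 1) - (1 + x / ((n:ℝ) - 1))) := by
      rw [hApow]; ring
    rw [heq]
    exact mul_neg_of_pos_of_neg hBpos hbneg

lemma phiFun_le_one (n : ℕ) (hn : 3 ≤ n) {x : ℝ} (hx : 0 ≤ x) : phiFun n x ≤ 1 := by
  rcases eq_or_lt_of_le hx with h | h
  · rw [← h, phiFun_zero]
  · have := phiFun_strictAntiOn n hn (le_refl (0:ℝ)) hx h
    rw [phiFun_zero] at this
    exact this.le

/-- If `H : [1,R] → [1,R_*]` is `C¹` with `H(1) = 1`, `H' > 0` and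
`𝓛[H] ≡ c`, then `log t = ∫_1^{H(t)} dy/(y √(Ψ(c/(yⁿ ρ(y)))))`, where `Ψ` is the
inverse of `Φ(ζ) = (1 - ζ)(1 + ζ/(n-1))^{(n-2)/2}`. -/
theorem stmt7 (n : ℕ) (hn : 3 ≤ n) (R Rs : ℝ) (hR : 1 < R) (hRs : 1 < Rs)
    (ρ : ℝ → ℝ) (hρ : IsRegularMetric n Rs ρ) (c : ℝ)
    (Ψ : ℝ → ℝ)
    (hΨ : ∀ ζ ≤ (1:ℝ), 0 ≤ Ψ ζ ∧
      (1 - Ψ ζ) * (1 + Ψ ζ / ((n : ℝ) - 1)) ^ (((n : ℝ) - 2) / 2) = ζ)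
    (H H' : ℝ → ℝ)
    (hmap : ∀ t ∈ Set.Icc 1 R, H t ∈ Set.Icc 1 Rs)
    (hH : ∀ t ∈ Set.Icc 1 R, HasDerivWithinAt H (H' t) (Set.Icc 1 R) t)
    (hH'cont : ContinuousOn H' (Set.Icc 1 R))
    (hH1 : H 1 = 1) (hH'pos : ∀ t ∈ Set.Icc 1 R, 0 < H' t)
    (hc : ∀ t ∈ Set.Icc 1 R,
      ρ (H t) * ((H t) ^ 2 - t ^ 2 * H' t ^ 2) *
        ((H t) ^ 2 + t ^ 2 * H' t ^ 2 / ((n : ℝ) - 1)) ^ (((n : ℝ) - 2) / 2) = c) :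
    ∀ t ∈ Set.Icc 1 R,
      Real.log t = ∫ y in (1:ℝ)..(H t), 1 / (y * Real.sqrt (Ψ (c / (y ^ n * ρ y)))) := by
  obtain ⟨hρC, hρpos, -⟩ := hρ
  have hn3 : (3:ℝ) ≤ (n:ℝ) := by exact_mod_cast hn
  have hΦanti := phiFun_strictAntiOn n hn
  -- `Ψ` is a left inverse of `phiFun n` on `[0, ∞)`
  have hpsiphi : ∀ x : ℝ, 0 ≤ x → Ψ (phiFun n x) = x := by
    intro x hx
    obtain ⟨h0, h1⟩ := hΨ _ (phiFun_le_one n hn hx)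
    have h1' : phiFun n (Ψ (phiFun n x)) = phiFun n x := h1
    exact hΦanti.injOn h0 hx h1'
  have hHpos : ∀ s ∈ Set.Icc 1 R, (0:ℝ) < H s := fun s hs =>
    lt_of_lt_of_le one_pos (hmap s hs).1
  have hHcont : ContinuousOn H (Set.Icc 1 R) := fun s hs => (hH s hs).continuousWithinAt
  -- the key algebraic identity coming from constancy of the characteristic expression
  have key : ∀ s ∈ Set.Icc 1 R,
      phiFun n ((s * H' s / H s) ^ 2) = c / (H s ^ n * ρ (H s)) := by
    intro s hs
    have h1s : (1:ℝ) ≤ s := hs.1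
    have hh : (0:ℝ) < H s := hHpos s hs
    have hρs : (0:ℝ) < ρ (H s) := hρpos _ (hmap s hs)
    have hH's : (0:ℝ) < H' s := hH'pos s hs
    have hcs := hc s hs
    have hne1 : ((n:ℝ) - 1) ≠ 0 := by linarith
    set z : ℝ := (s * H' s / H s) ^ 2 with hz
    have hzn : (0:ℝ) ≤ z := sq_nonneg _
    have e1 : H s ^ 2 - s ^ 2 * H' s ^ 2 = H s ^ 2 * (1 - z) := by
      rw [hz]; field_simp
    have e2 : H s ^ 2 + s ^ 2 * H' s ^ 2 / ((n:ℝ) - 1)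
        = H s ^ 2 * (1 + z / ((n:ℝ) - 1)) := by
      rw [hz]; field_simp
    have hzB : (0:ℝ) ≤ 1 + z / ((n:ℝ) - 1) := by
      have : (0:ℝ) ≤ z / ((n:ℝ) - 1) := div_nonneg hzn (by linarith)
      linarith
    have e3 : (H s ^ 2 * (1 + z / ((n:ℝ) - 1))) ^ (((n:ℝ) - 2) / 2)
        = (H s ^ 2 : ℝ) ^ (((n:ℝ) - 2) / 2) * (1 + z / ((n:ℝ) - 1)) ^ (((n:ℝ) - 2) / 2) :=
      Real.mul_rpow (sq_nonneg _) hzB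
    have e4 : H s ^ 2 * (H s ^ 2 : ℝ) ^ (((n:ℝ) - 2) / 2) = H s ^ n := by
      have h2eq : (H s ^ 2 : ℝ) = H s ^ (2:ℝ) := by
        rw [← Real.rpow_natCast (H s) 2]; norm_num
      rw [h2eq, ← Real.rpow_natCast (H s) n, ← Real.rpow_mul hh.le, ← Real.rpow_add hh]
      rw [show (2:ℝ) + 2 * (((n:ℝ) - 2) / 2) = (n:ℝ) by ring]
    have hcs' : c = ρ (H s) * H s ^ n * phiFun n z := by
      rw [← hcs, e1, e2, e3, ← e4]
      simp only [phiFun]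
      ring
    rw [hcs']
    have hden : H s ^ n * ρ (H s) ≠ 0 := by positivity
    field_simp
  -- the square root of `Ψ` along the curve
  have hq : ∀ s ∈ Set.Icc 1 R,
      Real.sqrt (Ψ (c / (H s ^ n * ρ (H s)))) = s * H' s / H s := by
    intro s hs
    have h1s : (1:ℝ) ≤ s := hs.1
    have hh : (0:ℝ) < H s := hHpos s hs
    have hH's : (0:ℝ) < H' s := hH'pos s hs
    rw [← key s hs, hpsiphi _ (sq_nonneg _)]
    exact Real.sqrt_sq (by positivity)
  -- `H` is strictly monotone
  have hmono : StrictMonoOn H (Set.Icc 1 R) := by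
    apply strictMonoOn_of_deriv_pos (convex_Icc 1 R) hHcont
    intro x hx
    rw [interior_Icc] at hx
    have hx' : x ∈ Set.Icc 1 R := ⟨hx.1.le, hx.2.le⟩
    have hd : HasDerivAt H (H' x) x := (hH x hx').hasDerivAt (Icc_mem_nhds hx.1 hx.2)
    rw [hd.deriv]; exact hH'pos x hx'
  -- continuity of `Ψ` at relevant points
  have hΨcont : ∀ ζ₀ : ℝ, ζ₀ < 1 → 0 < Ψ ζ₀ → ContinuousAt Ψ ζ₀ := by
    intro ζ₀ hζ1 hζpos
    have hanti : ∀ u v : ℝ, v ≤ u → u ≤ 1 → Ψ u ≤ Ψ v := by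
      intro u v hvu hu1
      rcases eq_or_lt_of_le hvu with h | h
      · rw [h]
      · by_contra hcon
        push_neg at hcon
        obtain ⟨h1a, h1b⟩ := hΨ u hu1
        obtain ⟨h2a, h2b⟩ := hΨ v (le_trans hvu hu1)
        have e1 : phiFun n (Ψ u) = u := h1b
        have e2 : phiFun n (Ψ v) = v := h2b
        have := hΦanti h2a h1a hcon
        rw [e1, e2] at this
        linarith
    set f : ℝ → ℝ := fun x => Ψ (-x) with hf
    have hmonof : MonotoneOn f (Set.Ici (-1 : ℝ)) := by
      intro a ha b hb hab
      have ha' : (-1:ℝ) ≤ a := ha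
      exact hanti (-a) (-b) (by linarith) (by linarith)
    have himgsub : Set.Ici (0:ℝ) ⊆ f '' Set.Ici (-1:ℝ) := by
      intro x hx
      refine ⟨-(phiFun n x), ?_, ?_⟩
      · exact neg_le_neg (phiFun_le_one n hn hx)
      · show Ψ (-(-(phiFun n x))) = x
        rw [neg_neg]; exact hpsiphi x hx
    have hcf : ContinuousAt f (-ζ₀) := by
      apply continuousAt_of_monotoneOn_of_image_mem_nhds hmonof
      · exact Ici_mem_nhds (by linarith)
      · have hfv : f (-ζ₀) = Ψ ζ₀ := by rw [hf]; simp
        rw [hfv]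
        exact Filter.mem_of_superset (Ici_mem_nhds hζpos) himgsub
    have hcomp : ContinuousAt (fun x : ℝ => f (-x)) ζ₀ := by
      have := hcf.comp (continuous_neg.continuousAt (x := ζ₀))
      exact this
    have heq : (fun x : ℝ => f (-x)) = Ψ := by
      funext x; rw [hf]; simp
    rw [← heq]
    exact hcomp
  -- main argument
  intro t ht
  have ht1 : (1:ℝ) ≤ t := ht.1
  have htR : t ≤ R := ht.2
  have hsub : Set.Icc 1 t ⊆ Set.Icc 1 R := Set.Icc_subset_Icc le_rfl htR
  have hHt1 : (1:ℝ) ≤ H t := (hmap t ht).1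
  have hHtRs : H t ≤ Rs := (hmap t ht).2
  have himg : Set.Icc 1 (H t) ⊆ H '' Set.Icc 1 t := by
    have := intermediate_value_Icc ht1 (hHcont.mono hsub)
    rwa [hH1] at this
  have himg' : H '' Set.Icc 1 t ⊆ Set.Icc 1 (H t) := by
    rintro y ⟨s, hs, rfl⟩
    refine ⟨?_, ?_⟩
    · rw [← hH1]
      exact hmono.monotoneOn ⟨le_rfl, hR.le⟩ (hsub hs) hs.1
    · exact hmono.monotoneOn (hsub hs) ht hs.2
  have hyfacts : ∀ y ∈ Set.Icc 1 (H t),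
      c / (y ^ n * ρ y) < 1 ∧ 0 < Ψ (c / (y ^ n * ρ y)) := by
    intro y hy
    obtain ⟨s, hs, rfl⟩ := himg hy
    have hs' := hsub hs
    have h1 := key s hs'
    have h1s : (1:ℝ) ≤ s := hs'.1
    have hh : (0:ℝ) < H s := hHpos s hs'
    have hH's : (0:ℝ) < H' s := hH'pos s hs'
    have hzpos : 0 < (s * H' s / H s) ^ 2 := by positivity
    constructor
    · rw [← h1]
      have := hΦanti (le_refl (0:ℝ)) (Set.mem_Ici.mpr (sq_nonneg _)) hzpos
      rwa [phiFun_zero] at this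
    · rw [← h1, hpsiphi _ (sq_nonneg _)]
      exact hzpos
  have hIccRs : Set.Icc (1:ℝ) (H t) ⊆ Set.Icc 1 Rs := Set.Icc_subset_Icc le_rfl hHtRs
  -- continuity of the integrand on `[1, H t]`
  have hgcont : ContinuousOn
      (fun y => 1 / (y * Real.sqrt (Ψ (c / (y ^ n * ρ y))))) (Set.Icc 1 (H t)) := by
    have hφ : ContinuousOn (fun y : ℝ => c / (y ^ n * ρ y)) (Set.Icc 1 (H t)) := by
      apply ContinuousOn.div continuousOn_const
      · exact (continuous_pow n).continuousOn.mul (hρC.continuousOn.mono hIccRs)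
      · intro y hy
        have hy1 : (0:ℝ) < y := lt_of_lt_of_le one_pos hy.1
        have hρy : 0 < ρ y := hρpos y (hIccRs hy)
        positivity
    have hΨφ : ContinuousOn (fun y : ℝ => Ψ (c / (y ^ n * ρ y))) (Set.Icc 1 (H t)) := by
      have hcontOn : ContinuousOn Ψ ((fun y : ℝ => c / (y ^ n * ρ y)) '' Set.Icc 1 (H t)) := by
        intro ζ₀ hζ₀
        obtain ⟨y, hy, rfl⟩ := hζ₀
        obtain ⟨hlt, hpos⟩ := hyfacts y hy
        exact (hΨcont _ hlt hpos).continuousWithinAt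
      exact hcontOn.comp hφ (Set.mapsTo_image _ _)
    have hsqrt : ContinuousOn (fun y : ℝ => Real.sqrt (Ψ (c / (y ^ n * ρ y))))
        (Set.Icc 1 (H t)) := Real.continuous_sqrt.comp_continuousOn hΨφ
    apply ContinuousOn.div continuousOn_const (continuousOn_id.mul hsqrt)
    intro y hy
    have hy1 : (0:ℝ) < y := lt_of_lt_of_le one_pos hy.1
    have hsq : 0 < Real.sqrt (Ψ (c / (y ^ n * ρ y))) :=
      Real.sqrt_pos.mpr (hyfacts y hy).2
    exact (mul_pos hy1 hsq).ne'
  have h1t : Set.uIcc (1:ℝ) t = Set.Icc 1 t := Set.uIcc_of_le ht1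
  have hder : ∀ x ∈ Set.Ioo (min 1 t) (max 1 t), HasDerivWithinAt H (H' x) (Set.Ioi x) x := by
    rw [min_eq_left ht1, max_eq_right ht1]
    intro x hx
    have hx' : x ∈ Set.Icc 1 R := ⟨hx.1.le, le_trans hx.2.le htR⟩
    exact ((hH x hx').hasDerivAt
      (Icc_mem_nhds hx.1 (lt_of_lt_of_le hx.2 htR))).hasDerivWithinAt
  have hsubst := intervalIntegral.integral_comp_smul_deriv'' (a := (1:ℝ)) (b := t)
    (f := H) (f' := H')
    (g := fun y => 1 / (y * Real.sqrt (Ψ (c / (y ^ n * ρ y)))))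
    (by rw [h1t]; exact hHcont.mono hsub) hder
    (by rw [h1t]; exact hH'cont.mono hsub)
    (by rw [h1t]; exact hgcont.mono himg')
  rw [hH1] at hsubst
  rw [← hsubst]
  have heq : Set.EqOn
      (fun x => H' x • ((fun y => 1 / (y * Real.sqrt (Ψ (c / (y ^ n * ρ y))))) ∘ H) x)
      (fun x => 1 / x) (Set.uIcc 1 t) := by
    rw [h1t]
    intro x hx
    have hx' := hsub hx
    have h0x : (0:ℝ) < x := lt_of_lt_of_le one_pos hx.1
    have hHx : (0:ℝ) < H x := hHpos x hx'
    have hH'x : (0:ℝ) < H' x := hH'pos x hx'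
    simp only [Function.comp_apply, smul_eq_mul]
    rw [hq x hx']
    field_simp
  rw [intervalIntegral.integral_congr heq,
    integral_one_div (by rw [h1t]; rintro ⟨h01, -⟩; linarith), div_one]
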